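/- Suppose x₁,…,xₙ are linearly independent and the GRW weights satisfy Assumption 1, with limiting weights q₁,…,qₙ and F(θ) = Σᵢ qᵢ φ(yᵢ⟨θ,xᵢ⟩). For all sufficiently large R the minimizer θ_R of F over the closed ball {θ : ‖θ‖₂ ≤ R} is unique. Suppose moreover that the limit u = lim_{R→∞} θ_R / R exists. Then there exists η₀ > 0 such that for every learning rate 0 < η ≤ η₀, the GRW iterates satisfy: the limit lim_{t→∞} θ^{(t)} / ‖θ^{(t)}‖₂ exists and equals u. -/

import Mathlib

open scoped RealInnerProductSpace
open Filter

set_option maxHeartbeats 1600000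

section auxiliary

variable {d n : ℕ}

lemma grad_ineq {φ φ' : ℝ → ℝ} (hconv : ConvexOn ℝ Set.univ φ)
    (hd : ∀ a : ℝ, HasDerivAt φ (φ' a) a) (a b : ℝ) :
    φ a + φ' a * (b - a) ≤ φ b := by
  rcases lt_trichotomy a b with h | h | h
  · have := hconv.le_slope_of_hasDerivAt (Set.mem_univ a) (Set.mem_univ b) h (hd a)
    rw [slope_def_field] at this
    have hba : 0 < b - a := by linarith
    have h2 := mul_le_mul_of_nonneg_right this hba.le
    rw [div_mul_cancel₀] at h2
    · linarith
    · exact ne_of_gt hba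
  · simp [h]
  · have := hconv.slope_le_of_hasDerivAt (Set.mem_univ b) (Set.mem_univ a) h (hd a)
    rw [slope_def_field] at this
    have hba : 0 < a - b := by linarith
    have h2 := mul_le_mul_of_nonneg_right this hba.le
    rw [div_mul_cancel₀] at h2
    · nlinarith
    · exact ne_of_gt hba

lemma deriv_mono' {φ φ' : ℝ → ℝ} (hconv : ConvexOn ℝ Set.univ φ)
    (hd : ∀ a : ℝ, HasDerivAt φ (φ' a) a) {a b : ℝ} (hab : a ≤ b) :
    φ' a ≤ φ' b := by
  rcases eq_or_lt_of_le hab with h | h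
  · rw [h]
  · have h1 := grad_ineq hconv hd a b
    have h2 := grad_ineq hconv hd b a
    nlinarith

lemma phi'_neg {φ φ' : ℝ → ℝ} (hconv : ConvexOn ℝ Set.univ φ)
    (hd : ∀ a : ℝ, HasDerivAt φ (φ' a) a) (hanti : StrictAnti φ) (a : ℝ) :
    φ' a < 0 := by
  by_contra h
  push_neg at h
  have h1 := grad_ineq hconv hd a (a + 1)
  have h2 := hanti (show a < a + 1 by linarith)
  nlinarith

lemma smooth_ineq {φ φ' : ℝ → ℝ} {L : NNReal}
    (hd : ∀ a : ℝ, HasDerivAt φ (φ' a) a) (hlip : LipschitzWith L φ') (a h : ℝ) :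
    φ (a + h) ≤ φ a + φ' a * h + (L : ℝ) / 2 * h ^ 2 := by
  have hdiff : Differentiable ℝ φ := fun t => (hd t).differentiableAt
  have hφcont : Continuous φ := hdiff.continuous
  set ψ : ℝ → ℝ := fun s => φ a + φ' a * s + (L : ℝ) / 2 * s ^ 2 - φ (a + s) with hψ
  have hψd : ∀ s : ℝ, HasDerivAt ψ (φ' a + (L : ℝ) * s - φ' (a + s)) s := by
    intro s
    have h1 : HasDerivAt (fun s : ℝ => φ (a + s)) (φ' (a + s)) s := by
      have := (hd (a + s)).comp s ((hasDerivAt_id s).const_add a)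
      simpa [Function.comp_def] using this
    have ha : HasDerivAt (fun s : ℝ => φ' a * s) (φ' a) s := by
      simpa using (hasDerivAt_id s).const_mul (φ' a)
    have hb : HasDerivAt (fun s : ℝ => (L : ℝ) / 2 * s ^ 2) ((L : ℝ) * s) s := by
      have h3 := (hasDerivAt_pow 2 s).const_mul ((L : ℝ) / 2)
      rw [show (L : ℝ) * s = (L : ℝ) / 2 * (((2 : ℕ) : ℝ) * s ^ (2 - 1)) by push_cast; ring]
      exact h3
    have h2 := (ha.const_add (φ a)).add hb
    exact h2.sub h1
  have hψcont : Continuous ψ := by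
    apply Continuous.sub
    · continuity
    · exact hφcont.comp (continuous_const.add continuous_id)
  have hlipR : ∀ s t : ℝ, |φ' s - φ' t| ≤ (L : ℝ) * |s - t| := by
    intro s t
    have := hlip.dist_le_mul s t
    rwa [Real.dist_eq, Real.dist_eq] at this
  have key : 0 ≤ ψ h := by
    rcases le_or_gt 0 h with hs | hs
    · have hmono : MonotoneOn ψ (Set.Icc 0 h) := by
        apply monotoneOn_of_deriv_nonneg (convex_Icc 0 h) hψcont.continuousOn
        · intro t _
          exact (hψd t).differentiableAt.differentiableWithinAt
        · intro t ht
          rw [interior_Icc, Set.mem_Ioo] at ht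
          rw [(hψd t).deriv]
          have h4 := (abs_le.mp (hlipR (a + t) a)).2
          rw [add_sub_cancel_left, abs_of_nonneg ht.1.le] at h4
          linarith
      have h0 : ψ 0 = 0 := by simp [hψ]
      have := hmono (Set.left_mem_Icc.mpr hs) (Set.right_mem_Icc.mpr hs) hs
      rw [h0] at this
      exact this
    · have hmono : AntitoneOn ψ (Set.Icc h 0) := by
        apply antitoneOn_of_deriv_nonpos (convex_Icc h 0) hψcont.continuousOn
        · intro t _
          exact (hψd t).differentiableAt.differentiableWithinAt
        · intro t ht
          rw [interior_Icc, Set.mem_Ioo] at ht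
          rw [(hψd t).deriv]
          have h4 := (abs_le.mp (hlipR (a + t) a)).1
          rw [add_sub_cancel_left, abs_of_nonpos ht.2.le] at h4
          linarith
      have h0 : ψ 0 = 0 := by simp [hψ]
      have := hmono (Set.left_mem_Icc.mpr hs.le) (Set.right_mem_Icc.mpr hs.le) hs.le
      rw [h0] at this
      exact this
  simp only [hψ] at key
  linarith [key]

lemma coercive {d n : ℕ} (x : Fin n → EuclideanSpace ℝ (Fin d))
    (hli : LinearIndependent ℝ x) :
    ∃ K > (0 : ℝ), ∀ c : Fin n → ℝ, (∑ i, |c i|) ≤ K * ‖∑ i, c i • x i‖ := by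
  classical
  set T : (Fin n → ℝ) →ₗ[ℝ] EuclideanSpace ℝ (Fin d) :=
    { toFun := fun c => ∑ i, c i • x i
      map_add' := by
        intro a b
        simp [add_smul, Finset.sum_add_distrib]
      map_smul' := by
        intro r a
        simp [smul_smul, Finset.smul_sum] } with hT
  have hinj : Function.Injective T := by
    rw [← LinearMap.ker_eq_bot, LinearMap.ker_eq_bot']
    intro c hc
    have := Fintype.linearIndependent_iff.mp hli c (by simpa [hT] using hc)
    funext i
    exact this i
  set e : (Fin n → ℝ) ≃ₗ[ℝ] LinearMap.range T := LinearEquiv.ofInjective T hinj with he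
  have hcont : Continuous (e.symm : LinearMap.range T →ₗ[ℝ] (Fin n → ℝ)) :=
    LinearMap.continuous_of_finiteDimensional _
  set g : LinearMap.range T →L[ℝ] (Fin n → ℝ) :=
    { toLinearMap := (e.symm : LinearMap.range T →ₗ[ℝ] (Fin n → ℝ)), cont := hcont } with hg
  refine ⟨n * ‖g‖ + 1, by positivity, ?_⟩
  intro c
  set w : LinearMap.range T := ⟨T c, LinearMap.mem_range_self T c⟩ with hw
  have hgw : g w = c := by
    show e.symm w = c
    rw [LinearEquiv.symm_apply_eq]
    apply Subtype.ext
    simp [hw, he]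
  have hnw : ‖w‖ = ‖∑ i, c i • x i‖ := by
    simp only [hw]
    rfl
  have hbound : ‖c‖ ≤ ‖g‖ * ‖∑ i, c i • x i‖ := by
    calc ‖c‖ = ‖g w‖ := by rw [hgw]
      _ ≤ ‖g‖ * ‖w‖ := g.le_opNorm w
      _ = ‖g‖ * ‖∑ i, c i • x i‖ := by rw [hnw]
  have hsum : (∑ i, |c i|) ≤ n * ‖c‖ := by
    calc (∑ i, |c i|) ≤ ∑ _i : Fin n, ‖c‖ := by
          apply Finset.sum_le_sum
          intro i _
          calc |c i| = ‖c i‖ := (Real.norm_eq_abs _).symm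
            _ ≤ ‖c‖ := norm_le_pi_norm c i
      _ = n * ‖c‖ := by simp [mul_comm]
  calc (∑ i, |c i|) ≤ n * ‖c‖ := hsum
    _ ≤ n * (‖g‖ * ‖∑ i, c i • x i‖) := by
        apply mul_le_mul_of_nonneg_left hbound (by positivity)
    _ ≤ (n * ‖g‖ + 1) * ‖∑ i, c i • x i‖ := by
        have := norm_nonneg (∑ i, c i • x i)
        nlinarith [norm_nonneg g]

/-- Given a linearly independent family in a Euclidean space, there is a vector whose
inner products with the family members take any prescribed values. -/
lemma exists_dual_vec (x : Fin n → EuclideanSpace ℝ (Fin d)) (hli : LinearIndependent ℝ x)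
    (y : Fin n → ℝ) : ∃ v : EuclideanSpace ℝ (Fin d), ∀ i, ⟪v, x i⟫ = y i := by
  classical
  set S := Submodule.span ℝ (Set.range x) with hS
  haveI : FiniteDimensional ℝ S := FiniteDimensional.span_of_finite ℝ (Set.finite_range x)
  set b : Module.Basis (Fin n) ℝ S := Module.Basis.span hli with hb
  set f₀ : S →ₗ[ℝ] ℝ := ∑ j, y j • b.coord j with hf₀
  set f : EuclideanSpace ℝ (Fin d) →ₗ[ℝ] ℝ := f₀ ∘ₗ (S.orthogonalProjectionOnto).toLinearMap with hf
  refine ⟨(InnerProductSpace.toDual ℝ _).symm (LinearMap.toContinuousLinearMap f), ?_⟩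
  intro i
  rw [InnerProductSpace.toDual_symm_apply]
  have hxS : x i ∈ S := Submodule.subset_span ⟨i, rfl⟩
  have hbi : (⟨x i, hxS⟩ : S) = b i := Subtype.ext (by rw [hb]; exact congrArg Subtype.val (Module.Basis.span_apply hli i).symm)
  have hproj : S.orthogonalProjectionOnto (x i) = b i := by
    rw [show (x i : EuclideanSpace ℝ (Fin d)) = ((⟨x i, hxS⟩ : S) : EuclideanSpace ℝ (Fin d)) from rfl]
    rw [Submodule.orthogonalProjectionOnto_mem_subspace_eq_self]
    exact hbi
  show f (x i) = y i
  rw [hf]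
  simp only [LinearMap.coe_comp, Function.comp_apply, ContinuousLinearMap.coe_coe]
  rw [hproj, hf₀]
  simp only [LinearMap.coe_sum, Finset.sum_apply, LinearMap.smul_apply, smul_eq_mul,
    Module.Basis.coord_apply, Module.Basis.repr_self]
  rw [Finset.sum_eq_single i]
  · simp
  · intro j _ hj; simp [Finsupp.single_apply, Ne.symm hj]
  · simp


lemma part_b {d n : ℕ} (hn : 0 < n)
    (x : Fin n → EuclideanSpace ℝ (Fin d)) (hx : ∀ i, ‖x i‖ ≤ 1)
    (y : Fin n → ℝ) (hy : ∀ i, y i = 1 ∨ y i = -1)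
    (hli : LinearIndependent ℝ x)
    (φ φ' : ℝ → ℝ) (L : NNReal)
    (hφpos : ∀ t : ℝ, 0 < φ t)
    (hφconv : ConvexOn ℝ Set.univ φ)
    (hφderiv : ∀ a : ℝ, HasDerivAt φ (φ' a) a)
    (hφlip : LipschitzWith L φ')
    (hφanti : StrictAnti φ)
    (q : ℕ → Fin n → ℝ)
    (hq0 : ∀ t i, 0 ≤ q t i)
    (hq1 : ∀ t, ∑ i, q t i = 1)
    (qlim : Fin n → ℝ)
    (hqlim : ∀ i, Tendsto (fun t => q t i) atTop (nhds (qlim i)))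
    (hqpos : ∀ i, 0 < qlim i)
    (θR : ℝ → EuclideanSpace ℝ (Fin d))
    (hθR : ∀ R : ℝ, 0 < R → ‖θR R‖ ≤ R ∧
      ∀ θ : EuclideanSpace ℝ (Fin d), ‖θ‖ ≤ R →
        (∑ i, qlim i * φ (y i * ⟪θR R, x i⟫)) ≤ ∑ i, qlim i * φ (y i * ⟪θ, x i⟫))
    (v : EuclideanSpace ℝ (Fin d)) (hv : ∀ i, ⟪v, x i⟫ = y i)
    (hsph : ∀ R : ℝ, 0 < R → ‖θR R‖ = R)
    (u : EuclideanSpace ℝ (Fin d))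
    (hu : Tendsto (fun R : ℝ => R⁻¹ • θR R) atTop (nhds u)) :
    ∃ η₀ > (0 : ℝ), ∀ η : ℝ, 0 < η → η ≤ η₀ →
      ∀ θ : ℕ → EuclideanSpace ℝ (Fin d),
        (∀ t, θ (t + 1) = θ t - η • ∑ i, (q t i * y i * φ' (y i * ⟪θ t, x i⟫)) • x i) →
        Tendsto (fun t => ‖θ t‖⁻¹ • θ t) atTop (nhds u) := by
  classical
  haveI : Nonempty (Fin n) := ⟨⟨0, hn⟩⟩
  refine ⟨(4 * ((L : ℝ) + 1))⁻¹, by positivity, ?_⟩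
  intro η hη hη₀ θ hrec
  set F : EuclideanSpace ℝ (Fin d) → ℝ := fun w => ∑ i, qlim i * φ (y i * ⟪w, x i⟫) with hF
  set M : ℕ → Fin n → ℝ := fun t i => y i * ⟪θ t, x i⟫ with hM
  set gt : ℕ → EuclideanSpace ℝ (Fin d) :=
    fun t => ∑ i, (q t i * y i * φ' (M t i)) • x i with hgt
  set G : ℕ → EuclideanSpace ℝ (Fin d) :=
    fun t => ∑ i, (qlim i * y i * φ' (M t i)) • x i with hG
  set ρ : ℕ → ℝ := fun t => ‖θ t‖ with hρ
  set c : ℕ → ℝ := fun t => ⟪(ρ t)⁻¹ • θ t, u⟫ with hc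
  set A : ℕ → ℝ := fun t => ∑ i, |φ' (M t i)| with hA
  set e : ℕ → ℝ := fun t => ∑ i, |q t i - qlim i| with he
  -- basic facts
  have hy2 : ∀ i, y i * y i = 1 := by
    intro i; rcases hy i with h | h <;> rw [h] <;> norm_num
  have hyabs : ∀ i, |y i| = 1 := by
    intro i; rcases hy i with h | h <;> rw [h] <;> norm_num
  have hrec' : ∀ t, θ (t + 1) = θ t - η • gt t := fun t => hrec t
  have hq1' : ∀ t i, q t i ≤ 1 := by
    intro t i
    rw [← hq1 t]
    exact Finset.single_le_sum (fun j _ => hq0 t j) (Finset.mem_univ i)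
  have hqlim1 : ∑ i, qlim i = 1 := by
    have h1 : Tendsto (fun t => ∑ i, q t i) atTop (nhds (∑ i, qlim i)) :=
      tendsto_finset_sum _ (fun i _ => hqlim i)
    have h2 : Tendsto (fun _ : ℕ => (1:ℝ)) atTop (nhds 1) := tendsto_const_nhds
    have h3 : (fun t => ∑ i, q t i) = fun _ : ℕ => (1:ℝ) := by
      funext t; exact hq1 t
    rw [h3] at h1
    exact tendsto_nhds_unique h1 h2
  have hqlim1' : ∀ i, qlim i ≤ 1 := by
    intro i
    rw [← hqlim1]
    exact Finset.single_le_sum (fun j _ => (hqpos j).le) (Finset.mem_univ i)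
  obtain ⟨qs, hqs_pos, hqs_le⟩ : ∃ qs > (0:ℝ), ∀ i, qs ≤ qlim i := by
    refine ⟨Finset.univ.inf' Finset.univ_nonempty qlim, ?_, ?_⟩
    · exact (Finset.lt_inf'_iff _).mpr (fun i _ => hqpos i)
    · intro i
      exact Finset.inf'_le _ (Finset.mem_univ i)
  have hinner_le : ∀ (w : EuclideanSpace ℝ (Fin d)) i, |⟪w, x i⟫| ≤ ‖w‖ := by
    intro w i
    calc |⟪w, x i⟫| ≤ ‖w‖ * ‖x i‖ := abs_real_inner_le_norm w (x i)
      _ ≤ ‖w‖ * 1 := by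
          apply mul_le_mul_of_nonneg_left (hx i) (norm_nonneg w)
      _ = ‖w‖ := mul_one _
  have hM_le : ∀ t i, M t i ≤ ρ t := by
    intro t i
    have h1 : M t i ≤ |M t i| := le_abs_self _
    have h2 : |M t i| = |y i| * |⟪θ t, x i⟫| := by rw [hM]; exact abs_mul _ _
    rw [hyabs i, one_mul] at h2
    exact h1.trans (h2.le.trans (hinner_le (θ t) i))
  have hphi'neg : ∀ a : ℝ, φ' a < 0 := phi'_neg hφconv hφderiv hφanti
  obtain ⟨K, hK_pos, hK⟩ := coercive x hli
  set K₁ : ℝ := K / qs with hK₁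
  have hK₁_pos : 0 < K₁ := div_pos hK_pos hqs_pos
  -- norm bounds on gradients
  have hsum_norm : ∀ (a : Fin n → ℝ), ‖∑ i, a i • x i‖ ≤ ∑ i, |a i| := by
    intro a
    calc ‖∑ i, a i • x i‖ ≤ ∑ i, ‖a i • x i‖ := norm_sum_le _ _
      _ ≤ ∑ i, |a i| := by
          apply Finset.sum_le_sum
          intro i _
          rw [norm_smul, Real.norm_eq_abs]
          calc |a i| * ‖x i‖ ≤ |a i| * 1 :=
                mul_le_mul_of_nonneg_left (hx i) (abs_nonneg _)
            _ = |a i| := mul_one _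
  have habs_coef : ∀ (w : Fin n → ℝ) t i, |w i * y i * φ' (M t i)| = |w i| * |φ' (M t i)| := by
    intro w t i
    rw [abs_mul, abs_mul, hyabs i, mul_one]
  have hgt_le : ∀ t, ‖gt t‖ ≤ ∑ i, q t i * |φ' (M t i)| := by
    intro t
    calc ‖gt t‖ ≤ ∑ i, |q t i * y i * φ' (M t i)| := hsum_norm _
      _ = ∑ i, q t i * |φ' (M t i)| := by
          apply Finset.sum_congr rfl
          intro i _
          rw [habs_coef (q t) t i, abs_of_nonneg (hq0 t i)]
  have hgt_le' : ∀ t, ‖gt t‖ ≤ A t := by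
    intro t
    refine (hgt_le t).trans ?_
    apply Finset.sum_le_sum
    intro i _
    calc q t i * |φ' (M t i)| ≤ 1 * |φ' (M t i)| :=
          mul_le_mul_of_nonneg_right (hq1' t i) (abs_nonneg _)
      _ = |φ' (M t i)| := one_mul _
  have hG_le : ∀ t, ‖G t‖ ≤ A t := by
    intro t
    calc ‖G t‖ ≤ ∑ i, |qlim i * y i * φ' (M t i)| := hsum_norm _
      _ ≤ A t := by
          apply Finset.sum_le_sum
          intro i _
          rw [habs_coef qlim t i, abs_of_nonneg (hqpos i).le]
          calc qlim i * |φ' (M t i)| ≤ 1 * |φ' (M t i)| :=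
                mul_le_mul_of_nonneg_right (hqlim1' i) (abs_nonneg _)
            _ = |φ' (M t i)| := one_mul _
  have hA_le : ∀ t, A t ≤ K₁ * ‖G t‖ := by
    intro t
    have h1 := hK (fun i => qlim i * y i * φ' (M t i))
    have h2 : (∑ i, |qlim i * y i * φ' (M t i)|) = ∑ i, qlim i * |φ' (M t i)| := by
      apply Finset.sum_congr rfl
      intro i _
      rw [habs_coef qlim t i, abs_of_nonneg (hqpos i).le]
    have h3 : qs * A t ≤ ∑ i, qlim i * |φ' (M t i)| := by
      rw [hA, Finset.mul_sum]
      apply Finset.sum_le_sum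
      intro i _
      exact mul_le_mul_of_nonneg_right (hqs_le i) (abs_nonneg _)
    have h4 : qs * A t ≤ K * ‖G t‖ := by
      rw [h2] at h1
      exact h3.trans h1
    rw [hK₁, div_mul_eq_mul_div, le_div_iff₀ hqs_pos]
    linarith [h4]
  have hphi'_le_A : ∀ t i, |φ' (M t i)| ≤ A t := by
    intro t i
    exact Finset.single_le_sum (f := fun j => |φ' (M t j)|) (fun j _ => abs_nonneg _)
      (Finset.mem_univ i)
  -- inner products with v
  have hxv : ∀ i, ⟪x i, v⟫ = y i := by
    intro i; rw [real_inner_comm]; exact hv i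
  have hgtv : ∀ t, ⟪gt t, v⟫ = ∑ i, q t i * φ' (M t i) := by
    intro t
    rw [hgt, sum_inner]
    apply Finset.sum_congr rfl
    intro i _
    rw [real_inner_smul_left, hxv i]
    have h5 : q t i * y i * φ' (M t i) * y i = q t i * φ' (M t i) * (y i * y i) := by ring
    rw [h5, hy2 i, mul_one]
  have hgtv_le : ∀ t, ⟪gt t, v⟫ ≤ -‖gt t‖ := by
    intro t
    rw [hgtv t]
    have h1 : (∑ i, q t i * φ' (M t i)) = -∑ i, q t i * |φ' (M t i)| := by
      rw [← Finset.sum_neg_distrib]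
      apply Finset.sum_congr rfl
      intro i _
      rw [abs_of_neg (hphi'neg (M t i))]
      ring
    rw [h1, neg_le_neg_iff]
    exact hgt_le t
  have hstep : ∀ t, ‖θ (t + 1) - θ t‖ = η * ‖gt t‖ := by
    intro t
    rw [hrec' t]
    have : θ t - η • gt t - θ t = -(η • gt t) := by abel
    rw [this, norm_neg, norm_smul, Real.norm_eq_abs, abs_of_pos hη]
  -- path length
  have hpath0 : ∀ s t : ℕ, s ≤ t →
      (∑ r ∈ Finset.Ico s t, η * ‖gt r‖) ≤ ⟪θ t, v⟫ - ⟪θ s, v⟫ := by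
    intro s
    refine Nat.le_induction ?_ ?_
    · simp
    · intro t hst ih
      rw [Finset.sum_Ico_succ_top hst]
      have h1 : ⟪θ (t+1), v⟫ = ⟪θ t, v⟫ - η * ⟪gt t, v⟫ := by
        rw [hrec' t, inner_sub_left, real_inner_smul_left]
      have h2 : η * ⟪gt t, v⟫ ≤ η * (-‖gt t‖) :=
        mul_le_mul_of_nonneg_left (hgtv_le t) hη.le
      have h3 : ⟪θ t, v⟫ + η * ‖gt t‖ ≤ ⟪θ (t+1), v⟫ := by
        rw [h1]; nlinarith
      linarith
  have hpath : ∀ s t : ℕ, s ≤ t →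
      (∑ r ∈ Finset.Ico s t, η * ‖gt r‖) ≤ ‖v‖ * (ρ t + ρ s) := by
    intro s t hst
    refine (hpath0 s t hst).trans ?_
    have h1 : ⟪θ t, v⟫ - ⟪θ s, v⟫ = ⟪θ t - θ s, v⟫ := by rw [inner_sub_left]
    rw [h1]
    calc ⟪θ t - θ s, v⟫ ≤ ‖θ t - θ s‖ * ‖v‖ := real_inner_le_norm _ _
      _ ≤ (ρ t + ρ s) * ‖v‖ := by
          apply mul_le_mul_of_nonneg_right _ (norm_nonneg v)
          exact (norm_sub_le _ _)
      _ = ‖v‖ * (ρ t + ρ s) := mul_comm _ _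
  -- error bounds
  have hgtG : ∀ t, ‖gt t - G t‖ ≤ e t * A t := by
    intro t
    have h1 : gt t - G t = ∑ i, ((q t i - qlim i) * y i * φ' (M t i)) • x i := by
      rw [hgt, hG, ← Finset.sum_sub_distrib]
      apply Finset.sum_congr rfl
      intro i _
      rw [← sub_smul]
      congr 1
      ring
    rw [h1]
    calc ‖∑ i, ((q t i - qlim i) * y i * φ' (M t i)) • x i‖
        ≤ ∑ i, |(q t i - qlim i) * y i * φ' (M t i)| := hsum_norm _
      _ ≤ ∑ i, |q t i - qlim i| * A t := by
          apply Finset.sum_le_sum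
          intro i _
          rw [habs_coef (fun j => q t j - qlim j) t i]
          exact mul_le_mul_of_nonneg_left (hphi'_le_A t i) (abs_nonneg _)
      _ = e t * A t := by rw [he, ← Finset.sum_mul]
  have he0 : Tendsto e atTop (nhds 0) := by
    have h1 : Tendsto e atTop (nhds (∑ _i : Fin n, (0:ℝ))) := by
      apply tendsto_finset_sum
      intro i _
      have h2 : Tendsto (fun t => q t i - qlim i) atTop (nhds (qlim i - qlim i)) :=
        (hqlim i).sub tendsto_const_nhds
      rw [sub_self] at h2
      have h3 := h2.abs
      rwa [abs_zero] at h3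
    simpa using h1
  have he_nonneg : ∀ t, 0 ≤ e t := by
    intro t
    exact Finset.sum_nonneg (fun i _ => abs_nonneg _)
  have hgtG' : ∀ t, ‖gt t - G t‖ ≤ (e t * K₁) * ‖G t‖ := by
    intro t
    calc ‖gt t - G t‖ ≤ e t * A t := hgtG t
      _ ≤ e t * (K₁ * ‖G t‖) := mul_le_mul_of_nonneg_left (hA_le t) (he_nonneg t)
      _ = (e t * K₁) * ‖G t‖ := by ring
  -- smoothness/descent
  have hGinner : ∀ t (w : EuclideanSpace ℝ (Fin d)),
      ⟪G t, w⟫ = ∑ i, qlim i * φ' (M t i) * (y i * ⟪w, x i⟫) := by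
    intro t w
    rw [hG, sum_inner]
    apply Finset.sum_congr rfl
    intro i _
    rw [real_inner_smul_left, real_inner_comm]
    ring
  have hsmooth : ∀ t (w : EuclideanSpace ℝ (Fin d)),
      F (θ t + w) ≤ F (θ t) + ⟪G t, w⟫ + (L : ℝ) / 2 * ‖w‖ ^ 2 := by
    intro t w
    have hterm : ∀ i, qlim i * φ (y i * ⟪θ t + w, x i⟫) ≤
        qlim i * φ (M t i) + qlim i * φ' (M t i) * (y i * ⟪w, x i⟫)
          + qlim i * ((L : ℝ) / 2 * ‖w‖ ^ 2) := by
      intro i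
      have h1 : y i * ⟪θ t + w, x i⟫ = M t i + y i * ⟪w, x i⟫ := by
        rw [hM, inner_add_left]; ring
      rw [h1]
      have h2 := smooth_ineq hφderiv hφlip (M t i) (y i * ⟪w, x i⟫)
      have h3 : (y i * ⟪w, x i⟫) ^ 2 ≤ ‖w‖ ^ 2 := by
        have h4 : |y i * ⟪w, x i⟫| ≤ ‖w‖ := by
          rw [abs_mul, hyabs i, one_mul]
          exact hinner_le w i
        calc (y i * ⟪w, x i⟫) ^ 2 = |y i * ⟪w, x i⟫| ^ 2 := (sq_abs _).symm
          _ ≤ ‖w‖ ^ 2 := by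
              apply pow_le_pow_left₀ (abs_nonneg _) h4
      have h5 : φ (M t i + y i * ⟪w, x i⟫) ≤
          φ (M t i) + φ' (M t i) * (y i * ⟪w, x i⟫) + (L : ℝ) / 2 * ‖w‖ ^ 2 := by
        refine h2.trans ?_
        have : (L : ℝ) / 2 * (y i * ⟪w, x i⟫) ^ 2 ≤ (L : ℝ) / 2 * ‖w‖ ^ 2 := by
          apply mul_le_mul_of_nonneg_left h3 (by positivity)
        linarith
      calc qlim i * φ (M t i + y i * ⟪w, x i⟫)
          ≤ qlim i * (φ (M t i) + φ' (M t i) * (y i * ⟪w, x i⟫) + (L : ℝ) / 2 * ‖w‖ ^ 2) :=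
            mul_le_mul_of_nonneg_left h5 (hqpos i).le
        _ = qlim i * φ (M t i) + qlim i * φ' (M t i) * (y i * ⟪w, x i⟫)
            + qlim i * ((L : ℝ) / 2 * ‖w‖ ^ 2) := by ring
    calc F (θ t + w) ≤ ∑ i, (qlim i * φ (M t i) + qlim i * φ' (M t i) * (y i * ⟪w, x i⟫)
          + qlim i * ((L : ℝ) / 2 * ‖w‖ ^ 2)) := Finset.sum_le_sum (fun i _ => hterm i)
      _ = F (θ t) + ⟪G t, w⟫ + (L : ℝ) / 2 * ‖w‖ ^ 2 := by
          rw [Finset.sum_add_distrib, Finset.sum_add_distrib, hGinner t w]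
          have h6 : (∑ i, qlim i * ((L : ℝ) / 2 * ‖w‖ ^ 2)) = (L : ℝ) / 2 * ‖w‖ ^ 2 := by
            rw [← Finset.sum_mul, hqlim1, one_mul]
          rw [h6]
  have hconvex : ∀ t (z : EuclideanSpace ℝ (Fin d)), F (θ t) - F z ≤ ⟪G t, θ t - z⟫ := by
    intro t z
    have hterm : ∀ i, qlim i * φ (M t i) - qlim i * φ (y i * ⟪z, x i⟫) ≤
        qlim i * φ' (M t i) * (y i * ⟪θ t - z, x i⟫) := by
      intro i
      have h1 := grad_ineq hφconv hφderiv (M t i) (y i * ⟪z, x i⟫)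
      have h2 : y i * ⟪θ t - z, x i⟫ = M t i - y i * ⟪z, x i⟫ := by
        rw [hM, inner_sub_left]; ring
      rw [h2]
      have h3 : φ (M t i) - φ (y i * ⟪z, x i⟫) ≤ φ' (M t i) * (M t i - y i * ⟪z, x i⟫) := by
        nlinarith [h1]
      calc qlim i * φ (M t i) - qlim i * φ (y i * ⟪z, x i⟫)
          = qlim i * (φ (M t i) - φ (y i * ⟪z, x i⟫)) := by ring
        _ ≤ qlim i * (φ' (M t i) * (M t i - y i * ⟪z, x i⟫)) :=
            mul_le_mul_of_nonneg_left h3 (hqpos i).le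
        _ = qlim i * φ' (M t i) * (M t i - y i * ⟪z, x i⟫) := by ring
    calc F (θ t) - F z = ∑ i, (qlim i * φ (M t i) - qlim i * φ (y i * ⟪z, x i⟫)) := by
          rw [hF, ← Finset.sum_sub_distrib]
      _ ≤ ∑ i, qlim i * φ' (M t i) * (y i * ⟪θ t - z, x i⟫) :=
          Finset.sum_le_sum (fun i _ => hterm i)
      _ = ⟪G t, θ t - z⟫ := (hGinner t _).symm
  have hFnonneg : ∀ w : EuclideanSpace ℝ (Fin d), 0 ≤ F w :=
    fun w => Finset.sum_nonneg (fun i _ => mul_nonneg (hqpos i).le (hφpos _).le)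
  obtain ⟨T₁, hT₁⟩ : ∃ T₁ : ℕ, ∀ s ≥ T₁, e s * K₁ ≤ 1/8 := by
    have h1 : Tendsto (fun s => e s * K₁) atTop (nhds 0) := by
      have := he0.mul_const K₁
      rwa [zero_mul] at this
    have h2 : ∀ᶠ s in atTop, e s * K₁ ≤ 1/8 :=
      h1.eventually (eventually_le_nhds (by norm_num))
    exact eventually_atTop.mp h2
  have hLη : (L : ℝ) * η ≤ 1 / 4 := by
    have h0 : (0:ℝ) < 4 * ((L : ℝ) + 1) := by positivity
    have h1 := mul_le_mul_of_nonneg_right hη₀ h0.le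
    rw [inv_mul_cancel₀ (ne_of_gt h0)] at h1
    nlinarith [hη.le, L.coe_nonneg]
  have hgtG8 : ∀ s ≥ T₁, ‖gt s - G s‖ ≤ 1/8 * ‖G s‖ := by
    intro s hs
    calc ‖gt s - G s‖ ≤ (e s * K₁) * ‖G s‖ := hgtG' s
      _ ≤ 1/8 * ‖G s‖ := mul_le_mul_of_nonneg_right (hT₁ s hs) (norm_nonneg _)
  have hgt_G : ∀ s ≥ T₁, ‖gt s‖ ≤ 9/8 * ‖G s‖ := by
    intro s hs
    calc ‖gt s‖ = ‖G s + (gt s - G s)‖ := by congr 1; abel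
      _ ≤ ‖G s‖ + ‖gt s - G s‖ := norm_add_le _ _
      _ ≤ ‖G s‖ + 1/8 * ‖G s‖ := by linarith [hgtG8 s hs]
      _ = 9/8 * ‖G s‖ := by ring
  have hip : ∀ s ≥ T₁, 7/8 * ‖G s‖ ^ 2 ≤ ⟪G s, gt s⟫ := by
    intro s hs
    have h1 : ⟪G s, gt s⟫ = ⟪G s, G s⟫ + ⟪G s, gt s - G s⟫ := by
      rw [← inner_add_right]; congr 1; abel
    have h2 : |⟪G s, gt s - G s⟫| ≤ ‖G s‖ * ‖gt s - G s‖ := abs_real_inner_le_norm _ _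
    have h3 : ‖G s‖ * ‖gt s - G s‖ ≤ ‖G s‖ * (1/8 * ‖G s‖) :=
      mul_le_mul_of_nonneg_left (hgtG8 s hs) (norm_nonneg _)
    have h4 : ⟪G s, G s⟫ = ‖G s‖ ^ 2 := real_inner_self_eq_norm_sq _
    have h5 := abs_le.mp h2
    rw [h1, h4]
    nlinarith
  have hdescent : ∀ s ≥ T₁, F (θ (s + 1)) ≤ F (θ s) - η / 4 * ‖G s‖ ^ 2 := by
    intro s hs
    have h1 : θ (s + 1) = θ s + (-(η • gt s)) := by rw [hrec' s]; abel
    have h2 := hsmooth s (-(η • gt s))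
    rw [← h1] at h2
    have h3 : ⟪G s, -(η • gt s)⟫ = -(η * ⟪G s, gt s⟫) := by
      rw [inner_neg_right, real_inner_smul_right]
    have h4 : ‖-(η • gt s)‖ ^ 2 = η ^ 2 * ‖gt s‖ ^ 2 := by
      rw [norm_neg, norm_smul, Real.norm_eq_abs, abs_of_pos hη, mul_pow]
    rw [h3, h4] at h2
    have h5 := hip s hs
    have h6 := hgt_G s hs
    have h7 : ‖gt s‖ ^ 2 ≤ (9/8) ^ 2 * ‖G s‖ ^ 2 := by
      have := pow_le_pow_left₀ (norm_nonneg (gt s)) h6 2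
      calc ‖gt s‖ ^ 2 ≤ (9/8 * ‖G s‖) ^ 2 := this
        _ = (9/8) ^ 2 * ‖G s‖ ^ 2 := by ring
    have h8 : (L : ℝ) / 2 * (η ^ 2 * ‖gt s‖ ^ 2) ≤ η / 4 * (81/128) * ‖G s‖ ^ 2 := by
      have h9 : (L : ℝ) / 2 * (η ^ 2 * ‖gt s‖ ^ 2) ≤ (L : ℝ) / 2 * (η ^ 2 * ((9/8) ^ 2 * ‖G s‖ ^ 2)) := by
        apply mul_le_mul_of_nonneg_left _ (by positivity)
        apply mul_le_mul_of_nonneg_left h7 (by positivity)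
      have h10 : (L : ℝ) / 2 * (η ^ 2 * ((9/8) ^ 2 * ‖G s‖ ^ 2))
          = ((L : ℝ) * η) * (η * (81/128) * ‖G s‖ ^ 2) := by ring
      have h11 : ((L : ℝ) * η) * (η * (81/128) * ‖G s‖ ^ 2) ≤ (1/4) * (η * (81/128) * ‖G s‖ ^ 2) := by
        apply mul_le_mul_of_nonneg_right hLη (by positivity)
      calc (L : ℝ) / 2 * (η ^ 2 * ‖gt s‖ ^ 2) ≤ ((L : ℝ) * η) * (η * (81/128) * ‖G s‖ ^ 2) := by
            rw [← h10]; exact h9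
        _ ≤ (1/4) * (η * (81/128) * ‖G s‖ ^ 2) := h11
        _ = η / 4 * (81/128) * ‖G s‖ ^ 2 := by ring
    have h12 : -(η * ⟪G s, gt s⟫) ≤ -(η * (7/8 * ‖G s‖ ^ 2)) := by
      apply neg_le_neg
      exact mul_le_mul_of_nonneg_left h5 hη.le
    nlinarith [h2, h8, h12, sq_nonneg ‖G s‖, hη.le]
  have hFmono : ∀ s t : ℕ, T₁ ≤ s → s ≤ t → F (θ t) ≤ F (θ s) := by
    intro s t hTs hst
    induction t, hst using Nat.le_induction with
    | base => exact le_refl _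
    | succ t hst ih =>
      have h1 := hdescent t (hTs.trans hst)
      have h2 : 0 ≤ η / 4 * ‖G t‖ ^ 2 := by positivity
      linarith
  have hsum_G0 : ∀ S t : ℕ, T₁ ≤ S → S ≤ t →
      (∑ r ∈ Finset.Ico S t, η * ‖G r‖ ^ 2) ≤ 4 * (F (θ S) - F (θ t)) := by
    intro S t hTS hst
    induction t, hst using Nat.le_induction with
    | base => simp
    | succ t hst ih =>
      rw [Finset.sum_Ico_succ_top hst]
      have h1 := hdescent t (hTS.trans hst)
      linarith
  have hsum_G : ∀ S t : ℕ, T₁ ≤ S → S ≤ t →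
      (∑ r ∈ Finset.Ico S t, η * ‖G r‖ ^ 2) ≤ 4 * F (θ S) := by
    intro S t hTS hst
    have := hsum_G0 S t hTS hst
    have h2 := hFnonneg (θ t)
    linarith
  have hG0 : Tendsto (fun s => ‖G s‖) atTop (nhds 0) := by
    have hsummable : Summable (fun k => η * ‖G (T₁ + k)‖ ^ 2) := by
      apply summable_of_sum_range_le (c := 4 * F (θ T₁))
      · intro k; positivity
      · intro m
        have h1 : (∑ k ∈ Finset.range m, η * ‖G (T₁ + k)‖ ^ 2)
            = ∑ r ∈ Finset.Ico T₁ (T₁ + m), η * ‖G r‖ ^ 2 := by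
          rw [Finset.sum_Ico_eq_sum_range]
          simp
        rw [h1]
        exact hsum_G T₁ (T₁ + m) le_rfl (Nat.le_add_right _ _)
    have h2 : Tendsto (fun k => η * ‖G (T₁ + k)‖ ^ 2) atTop (nhds 0) :=
      hsummable.tendsto_atTop_zero
    have h3 : Tendsto (fun k => ‖G (T₁ + k)‖ ^ 2) atTop (nhds 0) := by
      have h4 := h2.const_mul η⁻¹
      rw [mul_zero] at h4
      have h5 : (fun k => η⁻¹ * (η * ‖G (T₁ + k)‖ ^ 2)) = fun k => ‖G (T₁ + k)‖ ^ 2 := by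
        funext k
        field_simp
      rwa [h5] at h4
    have h6 : Tendsto (fun k => ‖G (T₁ + k)‖) atTop (nhds 0) := by
      have h7 := h3.sqrt
      rw [Real.sqrt_zero] at h7
      have h8 : (fun k => Real.sqrt (‖G (T₁ + k)‖ ^ 2)) = fun k => ‖G (T₁ + k)‖ := by
        funext k
        rw [Real.sqrt_sq (norm_nonneg _)]
      rwa [h8] at h7
    have h9 : (fun k => ‖G (T₁ + k)‖) = fun k => ‖G (k + T₁)‖ := by
      funext k; rw [Nat.add_comm]
    rw [h9] at h6
    exact (tendsto_add_atTop_iff_nat T₁).mp h6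
  have hA0 : Tendsto A atTop (nhds 0) := by
    apply squeeze_zero (fun t => Finset.sum_nonneg (fun i _ => abs_nonneg _)) hA_le
    have := hG0.const_mul K₁
    rwa [mul_zero] at this
  have hmargin : ∀ C : ℝ, ∀ᶠ s in atTop, ∀ i, C ≤ M s i := by
    intro C
    have hpos : 0 < -φ' C := by linarith [hphi'neg C]
    have h1 : ∀ᶠ s in atTop, A s < -φ' C := hA0.eventually (eventually_lt_nhds hpos)
    refine h1.mono ?_
    intro s hs i
    by_contra hcon
    push_neg at hcon
    have h2 : φ' (M s i) ≤ φ' C := deriv_mono' hφconv hφderiv hcon.le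
    have h3 : -φ' C ≤ |φ' (M s i)| := by
      rw [abs_of_neg (hphi'neg (M s i))]
      linarith
    linarith [hphi'_le_A s i]
  have hρ_top : Tendsto ρ atTop atTop := by
    rw [tendsto_atTop]
    intro b
    refine (hmargin b).mono ?_
    intro s hs
    exact (hs ⟨0, hn⟩).trans (hM_le s ⟨0, hn⟩)
  have hu_norm : ‖u‖ = 1 := by
    have h1 : Tendsto (fun R : ℝ => ‖R⁻¹ • θR R‖) atTop (nhds ‖u‖) := hu.norm
    have h2 : Tendsto (fun R : ℝ => ‖R⁻¹ • θR R‖) atTop (nhds 1) := by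
      apply Tendsto.congr' _ tendsto_const_nhds
      filter_upwards [eventually_ge_atTop (1:ℝ)] with R hR
      have hR0 : (0:ℝ) < R := lt_of_lt_of_le one_pos hR
      rw [norm_smul, Real.norm_eq_abs, abs_of_pos (inv_pos.mpr hR0), hsph R hR0,
        inv_mul_cancel₀ (ne_of_gt hR0)]
    exact tendsto_nhds_unique h1 h2
  have hnorm_smul_le : ∀ t, ‖(ρ t)⁻¹ • θ t‖ ≤ 1 := by
    intro t
    have hrt : ρ t = ‖θ t‖ := rfl
    rcases eq_or_lt_of_le (norm_nonneg (θ t)) with h | h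
    · rw [norm_smul, Real.norm_eq_abs, hrt, ← h]
      simp
    · rw [norm_smul, Real.norm_eq_abs, hrt, abs_of_pos (inv_pos.mpr h),
        inv_mul_cancel₀ (ne_of_gt h)]
  have hc_abs : ∀ t, |c t| ≤ 1 := by
    intro t
    calc |c t| ≤ ‖(ρ t)⁻¹ • θ t‖ * ‖u‖ := abs_real_inner_le_norm _ _
      _ ≤ 1 := by rw [hu_norm, mul_one]; exact hnorm_smul_le t
  have hc_le : ∀ t, c t ≤ 1 := fun t => (le_abs_self _).trans (hc_abs t)
  have hc_ge : ∀ t, -1 ≤ c t := fun t => neg_le_of_abs_le (hc_abs t)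
  -- MAIN CLAIM
  have hv1 : (1:ℝ) ≤ ‖v‖ := by
    have h1 := hinner_le v ⟨0, hn⟩
    rw [hv ⟨0, hn⟩] at h1
    calc (1:ℝ) = |y ⟨0, hn⟩| := (hyabs ⟨0, hn⟩).symm
      _ ≤ ‖v‖ := h1
  have hvpos : (0:ℝ) < ‖v‖ := lt_of_lt_of_le one_pos hv1
  have main : ∀ δ : ℝ, 0 < δ → δ < 1 → ∀ σ₀ : ℝ, -1 ≤ σ₀ → σ₀ ≤ 1 →
      (∀ᶠ s in atTop, σ₀ ≤ c s) → ∀ ε : ℝ, 0 < ε → ε ≤ 1 →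
      ∀ᶠ t in atTop, (1 + 2*δ*σ₀ - δ^2)/2 - ε ≤ c t := by
    intro δ hδ0 hδ1 σ₀ hσ₀g hσ₀l hev ε hε hε1
    set ε₂ := ε / (40 * (1 + ‖v‖)) with hε₂def
    have hε₂pos : 0 < ε₂ := by
      apply div_pos hε
      positivity
    have hε₂le : ε₂ ≤ 1/40 := by
      rw [hε₂def, div_le_iff₀ (by positivity)]
      nlinarith only [hε1, norm_nonneg v, hε.le]
    have hε₂ε : 40 * (1 + ‖v‖) * ε₂ = ε := by
      rw [hε₂def]
      field_simp
    obtain ⟨S₀, hS₀⟩ := eventually_atTop.mp hev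
    obtain ⟨S₁, hS₁⟩ : ∃ S₁, ∀ s ≥ S₁, e s * K₁ ≤ ε₂ := by
      have h1 : Tendsto (fun s => e s * K₁) atTop (nhds 0) := by
        have := he0.mul_const K₁
        rwa [zero_mul] at this
      exact eventually_atTop.mp (h1.eventually (eventually_le_nhds hε₂pos))
    set S := max (max S₀ S₁) T₁ with hSdef
    have hS_T₁ : T₁ ≤ S := le_max_right _ _
    have hS_S₀ : S₀ ≤ S := (le_max_left S₀ S₁).trans (le_max_left _ _)
    have hS_S₁ : S₁ ≤ S := (le_max_right S₀ S₁).trans (le_max_left _ _)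
    set CS := F (θ S) with hCSdef
    have hCS0 : 0 ≤ CS := hFnonneg _
    set MS := 3 * Real.sqrt (η * CS) + 1 with hMSdef
    have hMS0 : 0 < MS := by positivity
    have hGsq : ∀ s, S ≤ s → η * ‖G s‖ ^ 2 ≤ 4 * CS := by
      intro s hs
      have h2 := hdescent s (hS_T₁.trans hs)
      have h3 : F (θ s) ≤ CS := hFmono S s hS_T₁ hs
      have h4 := hFnonneg (θ (s+1))
      linarith only [h2, h3, h4]
    have hstepS : ∀ s, S ≤ s → η * ‖gt s‖ ≤ MS := by
      intro s hs
      have hs1 : T₁ ≤ s := hS_T₁.trans hs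
      have h1 := hGsq s hs
      have hηG : (0:ℝ) ≤ η * ‖G s‖ := mul_nonneg hη.le (norm_nonneg _)
      have h5 : (η * ‖G s‖) ^ 2 ≤ 4 * (η * CS) := by
        have h5a : η * (η * ‖G s‖ ^ 2) ≤ η * (4 * CS) :=
          mul_le_mul_of_nonneg_left h1 hη.le
        nlinarith only [h5a]
      have h6 : η * ‖G s‖ ≤ 2 * Real.sqrt (η * CS) := by
        calc η * ‖G s‖ = Real.sqrt ((η * ‖G s‖)^2) := (Real.sqrt_sq hηG).symm
          _ ≤ Real.sqrt (4 * (η * CS)) := Real.sqrt_le_sqrt h5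
          _ = 2 * Real.sqrt (η * CS) := by
              rw [show (4:ℝ) * (η * CS) = 2^2 * (η * CS) by ring,
                Real.sqrt_mul (by positivity), Real.sqrt_sq (by norm_num)]
      have h8 : η * ‖gt s‖ ≤ 9/8 * (η * ‖G s‖) := by
        have h9 := mul_le_mul_of_nonneg_left (hgt_G s hs1) hη.le
        linarith only [h9]
      have h10 : (0:ℝ) ≤ Real.sqrt (η * CS) := Real.sqrt_nonneg _
      have h11 : 9/8 * (η * ‖G s‖) ≤ 9/8 * (2 * Real.sqrt (η * CS)) := by
        apply mul_le_mul_of_nonneg_left h6 (by norm_num)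
      rw [hMSdef]
      linarith only [h8, h11, h10]
    obtain ⟨R₁, hR₁⟩ : ∃ R₁ : ℝ, ∀ R ≥ R₁, ‖R⁻¹ • θR R - u‖ ≤ ε₂ := by
      obtain ⟨N, hN⟩ := Metric.tendsto_atTop.mp hu ε₂ hε₂pos
      refine ⟨N, fun R hR => ?_⟩
      have := hN R hR
      rw [dist_eq_norm] at this
      exact this.le
    have hev_t : ∀ᶠ t in atTop,
        (S + 1 ≤ t ∧ R₁ ≤ ρ t ∧ ρ S / δ + 1 ≤ ρ t) ∧
        (MS / ε₂ ≤ ρ t ∧ 8 * η * CS / ε₂ ≤ ρ t ∧ 1 ≤ ρ t) := by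
      have e1 : ∀ᶠ t in atTop, S + 1 ≤ t := eventually_ge_atTop (S+1)
      have e2 := hρ_top.eventually_ge_atTop R₁
      have e3 := hρ_top.eventually_ge_atTop (ρ S / δ + 1)
      have e4 := hρ_top.eventually_ge_atTop (MS / ε₂)
      have e5 := hρ_top.eventually_ge_atTop (8 * η * CS / ε₂)
      have e6 := hρ_top.eventually_ge_atTop (1:ℝ)
      filter_upwards [e1, e2, e3, e4, e5, e6] with t h1 h2 h3 h4 h5 h6
      exact ⟨⟨h1, h2, h3⟩, h4, h5, h6⟩
    filter_upwards [hev_t] with t ht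
    obtain ⟨⟨ht1, ht2, ht3⟩, ht4, ht5, ht6⟩ := ht
    set B := ρ t with hBdef
    have hB0 : (0:ℝ) < B := lt_of_lt_of_le one_pos ht6
    have hρS_lt : ρ S < δ * B := by
      have h2 : (ρ S / δ + 1) * δ ≤ B * δ := mul_le_mul_of_nonneg_right ht3 hδ0.le
      have h3 : (ρ S / δ) * δ = ρ S := div_mul_cancel₀ _ (ne_of_gt hδ0)
      nlinarith only [h2, h3, hδ0]
    have hMSB : MS ≤ ε₂ * B := by
      rw [div_le_iff₀ hε₂pos] at ht4
      linarith only [ht4]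
    have hCSB : 8 * η * CS ≤ ε₂ * B^2 := by
      rw [div_le_iff₀ hε₂pos] at ht5
      have hBB : B ≤ B^2 := by nlinarith only [ht6, hB0.le]
      have h1 : ε₂ * B ≤ ε₂ * B^2 := mul_le_mul_of_nonneg_left hBB hε₂pos.le
      linarith only [ht5, h1]
    set z := θR B with hzdef
    have hzn : ‖z‖ = B := hsph B hB0
    have hzB : ‖B⁻¹ • z - u‖ ≤ ε₂ := hR₁ B ht2
    have hFzt : F z ≤ F (θ t) := (hθR B hB0).2 (θ t) (le_of_eq rfl)
    have hFz : ∀ r, S ≤ r → r ≤ t → F z ≤ F (θ r) :=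
      fun r h1 h2 => hFzt.trans (hFmono r t (hS_T₁.trans h1) h2)
    have hSt : S ≤ t := le_trans (Nat.le_succ S) ht1
    have hδB_le : δ * B ≤ B := by nlinarith only [hδ1.le, hB0.le, hδ0.le]
    have hexT : ∃ T', S ≤ T' ∧ δ * B ≤ ρ T' := ⟨t, hSt, hδB_le⟩
    have hTspec := Nat.find_spec hexT
    set T := Nat.find hexT with hTdef
    obtain ⟨hTS, hTρ⟩ := hTspec
    have hTt : T ≤ t := Nat.find_min' hexT ⟨hSt, hδB_le⟩
    have hTgtS : S < T := by
      rcases Nat.lt_or_ge S T with h | h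
      · exact h
      · exfalso
        have hTeq : T = S := le_antisymm h hTS
        rw [hTeq] at hTρ
        linarith only [hTρ, hρS_lt]
    have hTpred : ρ (T-1) < δ * B := by
      have h1 : T - 1 < T := Nat.sub_lt (by omega) one_pos
      have h2 := Nat.find_min hexT h1
      push_neg at h2
      exact h2 (by omega)
    have hρT_up : ρ T ≤ δ * B + ε₂ * B := by
      have h1 : T = (T-1) + 1 := by omega
      have h2 : ρ T ≤ ρ (T-1) + η * ‖gt (T-1)‖ := by
        have h3 : θ T = θ (T-1) + (θ T - θ (T-1)) := by abel
        calc ρ T = ‖θ (T-1) + (θ T - θ (T-1))‖ := by rw [← h3]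
          _ ≤ ‖θ (T-1)‖ + ‖θ T - θ (T-1)‖ := norm_add_le _ _
          _ = ρ (T-1) + η * ‖gt (T-1)‖ := by
              congr 1
              rw [h1]
              exact hstep (T-1)
      have h3 : η * ‖gt (T-1)‖ ≤ MS := hstepS (T-1) (by omega)
      linarith only [hTpred, hMSB, h2, h3]
    have hρT_pos : 0 < ρ T := lt_of_lt_of_le (mul_pos hδ0 hB0) hTρ
    have hcT : σ₀ ≤ c T := hS₀ T (hS_S₀.trans hTS)
    have hinnerTu : σ₀ * ρ T ≤ ⟪θ T, u⟫ := by
      have h1 : ρ T * c T = ⟪θ T, u⟫ := by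
        have h2 : c T = (ρ T)⁻¹ * ⟪θ T, u⟫ := by
          simp only [hc]
          rw [real_inner_smul_left]
        rw [h2, ← mul_assoc, mul_inv_cancel₀ (ne_of_gt hρT_pos), one_mul]
      rw [← h1]
      calc σ₀ * ρ T ≤ c T * ρ T := mul_le_mul_of_nonneg_right hcT hρT_pos.le
        _ = ρ T * c T := mul_comm _ _
    have hinnerTz : (σ₀ - ε₂) * (ρ T * B) ≤ ⟪θ T, z⟫ := by
      have h1 : B * ⟪θ T, B⁻¹ • z⟫ = ⟪θ T, z⟫ := by
        rw [real_inner_smul_right, ← mul_assoc, mul_inv_cancel₀ (ne_of_gt hB0), one_mul]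
      have h2 : ⟪θ T, B⁻¹ • z⟫ = ⟪θ T, u⟫ + ⟪θ T, B⁻¹ • z - u⟫ := by
        rw [inner_sub_right]
        ring
      have h3 : |⟪θ T, B⁻¹ • z - u⟫| ≤ ρ T * ε₂ := by
        calc |⟪θ T, B⁻¹ • z - u⟫| ≤ ‖θ T‖ * ‖B⁻¹ • z - u‖ := abs_real_inner_le_norm _ _
          _ ≤ ρ T * ε₂ := mul_le_mul_of_nonneg_left hzB (norm_nonneg _)
      have h4 := (abs_le.mp h3).1
      have h5 : σ₀ * ρ T - ρ T * ε₂ ≤ ⟪θ T, u⟫ + ⟪θ T, B⁻¹ • z - u⟫ := by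
        linarith only [hinnerTu, h4]
      calc (σ₀ - ε₂) * (ρ T * B) = B * (σ₀ * ρ T - ρ T * ε₂) := by ring
        _ ≤ B * (⟪θ T, u⟫ + ⟪θ T, B⁻¹ • z - u⟫) :=
            mul_le_mul_of_nonneg_left h5 hB0.le
        _ = B * ⟪θ T, B⁻¹ • z⟫ := by rw [h2]
        _ = ⟪θ T, z⟫ := h1
    have hDTstart : ‖θ T - z‖^2 ≤ B^2 * (1 + δ^2 - 2*δ*σ₀ + 9*ε₂) := by
      have h1 : ‖θ T - z‖^2 = ρ T^2 - 2*⟪θ T, z⟫ + B^2 := by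
        have h0 : ρ T = ‖θ T‖ := rfl
        rw [norm_sub_sq_real, hzn, h0]
      rw [h1]
      have h2 : ρ T - δ*B ≤ ε₂ * B := by linarith only [hρT_up]
      have h3 : 0 ≤ ρ T - δ*B := by linarith only [hTρ]
      -- ρT² ≤ (δB + ε₂B)²
      have h4 : ρ T^2 ≤ (δ*B + ε₂*B)^2 := by
        have := hρT_up
        nlinarith only [this, hρT_pos.le]
      -- -2σ₀ρTB ≤ -2σ₀δB² + 2ε₂B²
      have h5 : -2*σ₀*(ρ T*B) ≤ -2*σ₀*(δ*B*B) + 2*(ε₂*B*B) := by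
        have h6 : -2*σ₀*(ρ T*B) + 2*σ₀*(δ*B*B) = (-2*σ₀) * (B*(ρ T - δ*B)) := by ring
        have h7 : (-2*σ₀) * (B*(ρ T - δ*B)) ≤ 2 * (B*(ρ T - δ*B)) := by
          apply mul_le_mul_of_nonneg_right _ (mul_nonneg hB0.le h3)
          linarith only [hσ₀g]
        have h8 : B*(ρ T - δ*B) ≤ B*(ε₂*B) := mul_le_mul_of_nonneg_left h2 hB0.le
        nlinarith only [h6, h7, h8]
      have h9 : 2*δ*ε₂ + ε₂^2 ≤ 3*ε₂ := by
        nlinarith only [hδ1.le, hδ0.le, hε₂le, hε₂pos.le]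
      have h10 : (δ*B + ε₂*B)^2 = (δ^2 + 2*δ*ε₂ + ε₂^2)*B^2 := by ring
      have h11 : (δ^2 + 2*δ*ε₂ + ε₂^2)*B^2 ≤ (δ^2 + 3*ε₂)*B^2 := by
        apply mul_le_mul_of_nonneg_right _ (sq_nonneg B)
        linarith only [h9]
      -- 2ε₂ρTB ≤ 4ε₂B²  (via ρT ≤ 2B)
      have h12 : ρ T ≤ 2*B := by nlinarith only [hρT_up, hδ1.le, hε₂le, hB0.le]
      have h13 : 2*ε₂*(ρ T*B) ≤ 2*ε₂*(2*B*B) := by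
        apply mul_le_mul_of_nonneg_left _ (by linarith only [hε₂pos.le])
        nlinarith only [h12, hB0.le]
      nlinarith only [hinnerTz, h4, h5, h10, h11, h13]
    set W : ℕ → ℝ := fun r =>
      ∑ j ∈ Finset.Ico T r, (6*η*(e j * K₁)*‖G j‖*B + η^2*‖gt j‖^2) with hWdef
    have hWterm_nonneg : ∀ j, 0 ≤ 6*η*(e j * K₁)*‖G j‖*B + η^2*‖gt j‖^2 := by
      intro j
      have a1 : (0:ℝ) ≤ 6*η := by linarith only [hη.le]
      have a2 : (0:ℝ) ≤ e j * K₁ := mul_nonneg (he_nonneg j) hK₁_pos.le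
      have a3 : (0:ℝ) ≤ 6*η*(e j*K₁)*‖G j‖*B :=
        mul_nonneg (mul_nonneg (mul_nonneg a1 a2) (norm_nonneg _)) hB0.le
      have a4 : (0:ℝ) ≤ η^2*‖gt j‖^2 := by positivity
      linarith only [a3, a4]
    have hWmono : ∀ r r', r ≤ r' → W r ≤ W r' := by
      intro r r' hrr
      apply Finset.sum_le_sum_of_subset_of_nonneg
      · exact Finset.Ico_subset_Ico le_rfl hrr
      · intro j _ _
        exact hWterm_nonneg j
    have hWt : W t ≤ 24*‖v‖*ε₂*B^2 + 2*ε₂*B^2 := by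
      have hsplit : W t = 6*η*B * (∑ j ∈ Finset.Ico T t, (e j * K₁)*‖G j‖)
          + ∑ j ∈ Finset.Ico T t, η^2*‖gt j‖^2 := by
        simp only [hWdef]
        rw [Finset.sum_add_distrib, Finset.mul_sum]
        congr 1
        apply Finset.sum_congr rfl
        intro j _
        ring
      have hpart1 : (∑ j ∈ Finset.Ico T t, (e j * K₁)*‖G j‖)
          ≤ ε₂ * (8/7) * (∑ j ∈ Finset.Ico T t, ‖gt j‖) := by
        rw [Finset.mul_sum]
        apply Finset.sum_le_sum
        intro j hj
        rw [Finset.mem_Ico] at hj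
        have hjS : S₁ ≤ j := hS_S₁.trans (hTS.trans hj.1)
        have hjT₁ : T₁ ≤ j := hS_T₁.trans (hTS.trans hj.1)
        have h1 : e j * K₁ ≤ ε₂ := hS₁ j hjS
        have h2 : ‖G j‖ ≤ 8/7 * ‖gt j‖ := by
          have h3 := hgtG8 j hjT₁
          have h4 : ‖G j‖ ≤ ‖gt j‖ + ‖gt j - G j‖ := by
            calc ‖G j‖ = ‖gt j - (gt j - G j)‖ := by congr 1; abel
              _ ≤ ‖gt j‖ + ‖gt j - G j‖ := norm_sub_le _ _
          linarith only [h3, h4]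
        calc (e j * K₁)*‖G j‖ ≤ ε₂ * ‖G j‖ :=
              mul_le_mul_of_nonneg_right h1 (norm_nonneg _)
          _ ≤ ε₂ * (8/7 * ‖gt j‖) := mul_le_mul_of_nonneg_left h2 hε₂pos.le
          _ = ε₂ * (8/7) * ‖gt j‖ := by ring
      have hρT2B : ρ T ≤ 2*B := by nlinarith only [hρT_up, hδ1.le, hε₂le, hB0.le]
      have hpath1 : (∑ j ∈ Finset.Ico T t, ‖gt j‖) ≤ ‖v‖ * 3 * B * η⁻¹ := by
        have h1 := hpath T t hTt
        have h3 : (∑ j ∈ Finset.Ico T t, η * ‖gt j‖) = η * ∑ j ∈ Finset.Ico T t, ‖gt j‖ := by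
          rw [Finset.mul_sum]
        rw [h3] at h1
        have h4 : η * (∑ j ∈ Finset.Ico T t, ‖gt j‖) ≤ ‖v‖ * 3 * B := by
          have h4b : B + ρ T ≤ 3*B := by linarith only [hρT2B]
          calc η * (∑ j ∈ Finset.Ico T t, ‖gt j‖) ≤ ‖v‖ * (B + ρ T) := h1
            _ ≤ ‖v‖ * (3*B) := mul_le_mul_of_nonneg_left h4b hvpos.le
            _ = ‖v‖ * 3 * B := by ring
        calc (∑ j ∈ Finset.Ico T t, ‖gt j‖)
            = η⁻¹ * (η * (∑ j ∈ Finset.Ico T t, ‖gt j‖)) := by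
              rw [← mul_assoc, inv_mul_cancel₀ (ne_of_gt hη), one_mul]
          _ ≤ η⁻¹ * (‖v‖ * 3 * B) :=
              mul_le_mul_of_nonneg_left h4 (inv_nonneg.mpr hη.le)
          _ = ‖v‖ * 3 * B * η⁻¹ := by ring
      have hpart2 : (∑ j ∈ Finset.Ico T t, η^2*‖gt j‖^2) ≤ 2*ε₂*B^2 := by
        have h3 : (∑ j ∈ Finset.Ico T t, η^2*‖gt j‖^2)
            ≤ ∑ j ∈ Finset.Ico T t, 2 * (η * (η * ‖G j‖^2)) := by
          apply Finset.sum_le_sum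
          intro j hj
          rw [Finset.mem_Ico] at hj
          have hjT₁ : T₁ ≤ j := hS_T₁.trans (hTS.trans hj.1)
          have e1 : ‖gt j‖^2 ≤ (81/64)*‖G j‖^2 := by
            nlinarith only [hgt_G j hjT₁, norm_nonneg (G j), norm_nonneg (gt j)]
          have e2 : η^2*‖gt j‖^2 ≤ η^2*((81/64)*‖G j‖^2) :=
            mul_le_mul_of_nonneg_left e1 (sq_nonneg η)
          nlinarith only [e2, sq_nonneg η, norm_nonneg (G j), sq_nonneg (‖G j‖*η)]
        have h4 : (∑ j ∈ Finset.Ico T t, 2 * (η * (η * ‖G j‖^2)))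
            = 2 * η * (∑ j ∈ Finset.Ico T t, η * ‖G j‖^2) := by
          rw [Finset.mul_sum]
          apply Finset.sum_congr rfl
          intro j _
          ring
        have h5 : (∑ j ∈ Finset.Ico T t, η * ‖G j‖^2) ≤ 4 * F (θ T) :=
          hsum_G T t (hS_T₁.trans hTS) hTt
        have h6 : F (θ T) ≤ CS := hFmono S T hS_T₁ hTS
        have h7 : 2 * η * (∑ j ∈ Finset.Ico T t, η * ‖G j‖^2) ≤ 2 * η * (4 * CS) := by
          apply mul_le_mul_of_nonneg_left _ (by linarith only [hη.le])
          linarith only [h5, h6, mul_le_mul_of_nonneg_left h6 (by norm_num : (0:ℝ) ≤ 4)]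
        have h8 : (0:ℝ) ≤ ε₂*B^2 := mul_nonneg hε₂pos.le (sq_nonneg B)
        calc (∑ j ∈ Finset.Ico T t, η^2*‖gt j‖^2)
            ≤ 2 * η * (∑ j ∈ Finset.Ico T t, η * ‖G j‖^2) := by rw [← h4]; exact h3
          _ ≤ 2 * η * (4 * CS) := h7
          _ = 8 * η * CS := by ring
          _ ≤ ε₂ * B^2 := hCSB
          _ ≤ 2*ε₂*B^2 := by linarith only [h8]
      rw [hsplit]
      have ha1 : (0:ℝ) ≤ 6*η*B := mul_nonneg (by linarith only [hη.le]) hB0.le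
      have h8 : 6*η*B * (∑ j ∈ Finset.Ico T t, (e j * K₁)*‖G j‖)
          ≤ 6*η*B * (ε₂ * (8/7) * (‖v‖ * 3 * B * η⁻¹)) := by
        apply mul_le_mul_of_nonneg_left _ ha1
        calc (∑ j ∈ Finset.Ico T t, (e j * K₁)*‖G j‖)
            ≤ ε₂ * (8/7) * (∑ j ∈ Finset.Ico T t, ‖gt j‖) := hpart1
          _ ≤ ε₂ * (8/7) * (‖v‖ * 3 * B * η⁻¹) := by
              apply mul_le_mul_of_nonneg_left hpath1
              exact mul_nonneg hε₂pos.le (by norm_num)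
      have h9 : 6*η*B * (ε₂ * (8/7) * (‖v‖ * 3 * B * η⁻¹)) = (144/7)*ε₂*‖v‖*B^2 := by
        field_simp
        ring
      have h10 : (144/7)*ε₂*‖v‖*B^2 ≤ 24*‖v‖*ε₂*B^2 := by
        have nn : (0:ℝ) ≤ ε₂*‖v‖*B^2 :=
          mul_nonneg (mul_nonneg hε₂pos.le hvpos.le) (sq_nonneg B)
        nlinarith only [nn]
      linarith only [hpart2, h8, h9.le, h9.ge, h10]
    have hεsmall : 24*‖v‖*ε₂ + 2*ε₂ + 9*ε₂ ≤ ε := by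
      have nn : (0:ℝ) ≤ ‖v‖*ε₂ := mul_nonneg hvpos.le hε₂pos.le
      nlinarith only [hε₂ε, nn, hε₂pos.le]
    have hδsq : δ^2 ≤ 1 := by nlinarith only [hδ0.le, hδ1.le]
    have hδσ : δ*(-1) ≤ δ*σ₀ := mul_le_mul_of_nonneg_left hσ₀g hδ0.le
    have hQ9 : ∀ r, T ≤ r → r ≤ t → ‖θ T - z‖^2 + W r ≤ 9 * B^2 := by
      intro r h1 h2
      have h3 := hWmono r t h2
      have q1 : 1 + δ^2 - 2*δ*σ₀ + 9*ε₂ ≤ 5 := by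
        nlinarith only [hδsq, hδσ, hδ1.le, hδ0.le, hε₂le]
      have q2 : ‖θ T - z‖^2 ≤ 5*B^2 := by
        have := mul_le_mul_of_nonneg_left q1 (sq_nonneg B)
        nlinarith only [hDTstart, this]
      have q3a : 24*‖v‖*ε₂ + 2*ε₂ ≤ 1 := by
        have nn : (0:ℝ) ≤ ‖v‖*ε₂ := mul_nonneg hvpos.le hε₂pos.le
        nlinarith only [hεsmall, hε₂pos.le, hε1, nn]
      have q3b := mul_le_mul_of_nonneg_right q3a (sq_nonneg B)
      have q3 : W t ≤ B^2 := by nlinarith only [hWt, q3b]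
      nlinarith only [h3, q2, q3, sq_nonneg B]
    have hind : ∀ r, T ≤ r → r ≤ t → ‖θ r - z‖^2 ≤ ‖θ T - z‖^2 + W r := by
      intro r hr1
      induction r, hr1 using Nat.le_induction with
      | base =>
        intro _
        have hW0 : W T = 0 := by simp only [hWdef]; simp
        rw [hW0]
        simp
      | succ r hr ih =>
        intro hrt
        have hrt' : r ≤ t := le_trans (Nat.le_succ r) hrt
        have hDr := ih hrt'
        have hDr3 : ‖θ r - z‖ ≤ 3 * B := by
          have h1 : ‖θ r - z‖^2 ≤ 9 * B^2 := le_trans hDr (hQ9 r hr hrt')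
          nlinarith only [h1, norm_nonneg (θ r - z), hB0.le]
        have hrT₁ : T₁ ≤ r := hS_T₁.trans (hTS.trans hr)
        have hrS : S ≤ r := hTS.trans hr
        have hexp : ‖θ (r+1) - z‖^2 = ‖θ r - z‖^2 - 2*(η * ⟪θ r - z, gt r⟫)
            + η^2 * ‖gt r‖^2 := by
          have h1 : θ (r+1) - z = (θ r - z) - η • gt r := by
            rw [hrec' r]
            abel
          rw [h1, norm_sub_sq_real, real_inner_smul_right, norm_smul, Real.norm_eq_abs,
            abs_of_pos hη, mul_pow]
        have hlow : -((e r * K₁) * ‖G r‖ * (3*B)) ≤ ⟪θ r - z, gt r⟫ := by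
          have h1 : ⟪θ r - z, gt r⟫ = ⟪G r, θ r - z⟫ + ⟪gt r - G r, θ r - z⟫ := by
            rw [real_inner_comm]
            rw [← inner_add_left]
            congr 1
            abel
          have h2 : F (θ r) - F z ≤ ⟪G r, θ r - z⟫ := hconvex r z
          have h3 : 0 ≤ F (θ r) - F z := by
            have := hFz r hrS hrt'
            linarith only [this]
          have h4 : |⟪gt r - G r, θ r - z⟫| ≤ (e r * K₁) * ‖G r‖ * (3*B) := by
            have hnn : (0:ℝ) ≤ (e r * K₁) * ‖G r‖ :=
              mul_nonneg (mul_nonneg (he_nonneg r) hK₁_pos.le) (norm_nonneg _)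
            calc |⟪gt r - G r, θ r - z⟫| ≤ ‖gt r - G r‖ * ‖θ r - z‖ :=
                  abs_real_inner_le_norm _ _
              _ ≤ ((e r * K₁) * ‖G r‖) * (3*B) := by
                  apply mul_le_mul (hgtG' r) hDr3 (norm_nonneg _) hnn
              _ = (e r * K₁) * ‖G r‖ * (3*B) := by ring
          have h5 := (abs_le.mp h4).1
          linarith only [h1.le, h1.ge, h2, h3, h5]
        have hWsucc : W (r+1) = W r + (6*η*(e r * K₁)*‖G r‖*B + η^2*‖gt r‖^2) := by
          simp only [hWdef]
          exact Finset.sum_Ico_succ_top hr _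
        rw [hexp, hWsucc]
        have h7 := mul_le_mul_of_nonneg_left hlow hη.le
        linarith only [hDr, h7]
    have hDt : ‖θ t - z‖^2 ≤ B^2*(1 + δ^2 - 2*δ*σ₀ + ε) := by
      have h1 := hind t hTt le_rfl
      have h2b := mul_le_mul_of_nonneg_right hεsmall (sq_nonneg B)
      nlinarith only [h1, hWt, hDTstart, h2b]
    have hinner_tz : (B^2*(1 + 2*δ*σ₀ - δ^2 - ε))/2 ≤ ⟪θ t, z⟫ := by
      have h1 : ‖θ t - z‖^2 = B^2 - 2*⟪θ t, z⟫ + B^2 := by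
        have h0 : B = ‖θ t‖ := rfl
        rw [norm_sub_sq_real, hzn, ← h0]
      linarith only [hDt, h1.le, h1.ge]
    have hinner_tu : B*(1 + 2*δ*σ₀ - δ^2 - ε)/2 - B*ε₂ ≤ ⟪θ t, u⟫ := by
      have h1 : ⟪θ t, u⟫ = ⟪θ t, B⁻¹ • z⟫ - ⟪θ t, B⁻¹ • z - u⟫ := by
        rw [inner_sub_right]
        ring
      have h2 : ⟪θ t, B⁻¹ • z⟫ = B⁻¹ * ⟪θ t, z⟫ := real_inner_smul_right _ _ _
      have h3 : |⟪θ t, B⁻¹ • z - u⟫| ≤ B * ε₂ := by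
        calc |⟪θ t, B⁻¹ • z - u⟫| ≤ ‖θ t‖ * ‖B⁻¹ • z - u‖ := abs_real_inner_le_norm _ _
          _ ≤ B * ε₂ := mul_le_mul_of_nonneg_left hzB (norm_nonneg _)
      have h4 := (abs_le.mp h3).2
      have h5 : B⁻¹ * ((B^2*(1 + 2*δ*σ₀ - δ^2 - ε))/2) ≤ B⁻¹ * ⟪θ t, z⟫ :=
        mul_le_mul_of_nonneg_left hinner_tz (inv_nonneg.mpr hB0.le)
      have h6 : B⁻¹ * ((B^2*(1 + 2*δ*σ₀ - δ^2 - ε))/2) = B*(1 + 2*δ*σ₀ - δ^2 - ε)/2 := by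
        field_simp
      rw [h1, h2]
      linarith only [h4, h5, h6.le, h6.ge]
    have hct : c t = B⁻¹ * ⟪θ t, u⟫ := by
      have h2 : c t = (ρ t)⁻¹ * ⟪θ t, u⟫ := by
        simp only [hc]
        rw [real_inner_smul_left]
      exact h2
    rw [hct]
    have h7 : B⁻¹ * (B*(1 + 2*δ*σ₀ - δ^2 - ε)/2 - B*ε₂) ≤ B⁻¹ * ⟪θ t, u⟫ :=
      mul_le_mul_of_nonneg_left hinner_tu (inv_nonneg.mpr hB0.le)
    have h8 : B⁻¹ * (B*(1 + 2*δ*σ₀ - δ^2 - ε)/2 - B*ε₂) = (1 + 2*δ*σ₀ - δ^2 - ε)/2 - ε₂ := by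
      field_simp
    rw [h8] at h7
    have h9 : (1 + 2*δ*σ₀ - δ^2)/2 - ε ≤ (1 + 2*δ*σ₀ - δ^2 - ε)/2 - ε₂ := by
      have h10 : ε₂ ≤ ε/2 := by
        rw [hε₂def, div_le_div_iff₀ (by positivity) (by norm_num)]
        nlinarith only [hvpos.le, hε.le]
      linarith only [h10]
    linarith only [h7, h9]
  -- liminf bootstrap
  have hbdd_le : IsBoundedUnder (· ≤ ·) atTop c := isBoundedUnder_of ⟨1, hc_le⟩
  have hbdd_ge : IsBoundedUnder (· ≥ ·) atTop c := isBoundedUnder_of ⟨-1, hc_ge⟩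
  have hcob_le : IsCoboundedUnder (· ≤ ·) atTop c := hbdd_ge.isCoboundedUnder_le
  have hcob_ge : IsCoboundedUnder (· ≥ ·) atTop c := hbdd_le.isCoboundedUnder_ge
  set σ := liminf c atTop with hσdef
  have hσ_le : σ ≤ 1 := by
    have h1 : σ ≤ limsup c atTop := liminf_le_limsup hbdd_le hbdd_ge
    have h2 : limsup c atTop ≤ 1 := limsup_le_of_le hcob_le (Eventually.of_forall hc_le)
    linarith
  have hkey : ∀ δ : ℝ, 0 < δ → δ < 1 → (1 + 2*δ*σ - δ^2)/2 ≤ σ := by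
    intro δ hδ0 hδ1
    have h2 : ∀ ε : ℝ, 0 < ε → ε ≤ 1 → (1 + 2*δ*σ - δ^2)/2 - 2*ε ≤ σ := by
      intro ε hε hε1
      set σ₀ := max (σ - ε) (-1) with hσ₀def
      have hσ₀_ge : (-1:ℝ) ≤ σ₀ := le_max_right _ _
      have hσ₀_le : σ₀ ≤ 1 := max_le (by linarith) (by norm_num)
      have hev : ∀ᶠ s in atTop, σ₀ ≤ c s := by
        have h3 : ∀ᶠ s in atTop, σ - ε < c s :=
          eventually_lt_of_lt_liminf (by linarith) hbdd_ge
        refine h3.mono fun s hs => ?_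
        exact max_le hs.le (hc_ge s)
      have h4 := main δ hδ0 hδ1 σ₀ hσ₀_ge hσ₀_le hev ε hε hε1
      have h5 : (1 + 2*δ*σ₀ - δ^2)/2 - ε ≤ σ := le_liminf_of_le hcob_ge h4
      have h6 : σ - ε ≤ σ₀ := le_max_left _ _
      have h7 : 2*δ*(σ - ε) ≤ 2*δ*σ₀ := by
        apply mul_le_mul_of_nonneg_left h6 (by linarith)
      have h8 : 0 ≤ ε * (1 - δ) := mul_nonneg hε.le (by linarith)
      nlinarith [h5, h7, h8]
    by_contra hcon
    push_neg at hcon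
    set g := (1 + 2*δ*σ - δ^2)/2 - σ with hgdef
    have hg : 0 < g := by rw [hgdef]; linarith
    have h8 := h2 (min (g/4) 1) (lt_min (by linarith) one_pos) (min_le_right _ _)
    have h9 : min (g/4) 1 ≤ g/4 := min_le_left _ _
    linarith
  have hσ_ge1 : 1 ≤ σ := by
    by_contra hcon
    push_neg at hcon
    set δ := max σ (1/2) with hδdef
    have hδ0 : (0:ℝ) < δ := lt_of_lt_of_le (by norm_num) (le_max_right _ _)
    have hδ1 : δ < 1 := max_lt hcon (by norm_num)
    have h1 := hkey δ hδ0 hδ1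
    have h2 : (1+δ)/2 ≤ σ := by
      by_contra h3
      push_neg at h3
      have h4 : (0:ℝ) < 1 - δ := by linarith
      nlinarith [mul_pos h4 (show (0:ℝ) < (1+δ)/2 - σ by linarith)]
    have h5 : σ ≤ δ := le_max_left _ _
    linarith
  have hclim : Tendsto c atTop (nhds 1) :=
    tendsto_of_le_liminf_of_limsup_le hσ_ge1
      (limsup_le_of_le hcob_le (Eventually.of_forall hc_le)) hbdd_le hbdd_ge
  -- conclusion
  have hnormalized : (fun t => dist (‖θ t‖⁻¹ • θ t) u) =ᶠ[atTop]
      (fun t => Real.sqrt (2 - 2 * c t)) := by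
    filter_upwards [hρ_top.eventually_ge_atTop 1] with t ht
    have hρpos : (0:ℝ) < ‖θ t‖ := lt_of_lt_of_le one_pos ht
    have h3 : ‖‖θ t‖⁻¹ • θ t‖ = 1 := by
      rw [norm_smul, Real.norm_eq_abs, abs_of_pos (inv_pos.mpr hρpos),
        inv_mul_cancel₀ (ne_of_gt hρpos)]
    have h2 : ‖‖θ t‖⁻¹ • θ t - u‖^2 = 2 - 2 * c t := by
      rw [norm_sub_sq_real, h3, hu_norm]
      have h4 : ⟪‖θ t‖⁻¹ • θ t, u⟫ = c t := rfl
      rw [h4]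
      ring
    rw [dist_eq_norm, ← Real.sqrt_sq (norm_nonneg (‖θ t‖⁻¹ • θ t - u)), h2]
  have h4 : Tendsto (fun t => 2 - 2 * c t) atTop (nhds 0) := by
    have h5 : Tendsto (fun t => 2 - 2 * c t) atTop (nhds (2 - 2 * 1)) :=
      tendsto_const_nhds.sub (hclim.const_mul 2)
    norm_num at h5
    exact h5
  have h6 : Tendsto (fun t => Real.sqrt (2 - 2 * c t)) atTop (nhds 0) := by
    have h7 := h4.sqrt
    rwa [Real.sqrt_zero] at h7
  rw [tendsto_iff_dist_tendsto_zero]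
  exact Tendsto.congr' hnormalized.symm h6


end auxiliary

/-- Under the assumptions of Statement 7, with
`F(θ) = Σᵢ qᵢ φ(yᵢ⟨θ,xᵢ⟩)` and `θR R` a minimizer of `F` over the closed ball of
radius `R`: (a) for all sufficiently large `R` the minimizer over the ball of
radius `R` is unique (hence equal to `θR R`); (b) if `u = lim_{R→∞} θR R / R`
exists, then there is `η₀ > 0` such that for every `0 < η ≤ η₀` the normalized
GRW iterates `θ^{(t)}/‖θ^{(t)}‖` converge to `u`. -/
theorem stmt_10 {d n : ℕ} (hn : 0 < n)
    (x : Fin n → EuclideanSpace ℝ (Fin d)) (hx : ∀ i, ‖x i‖ ≤ 1)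
    (y : Fin n → ℝ) (hy : ∀ i, y i = 1 ∨ y i = -1)
    (hli : LinearIndependent ℝ x)
    (φ φ' : ℝ → ℝ) (L : NNReal)
    (hφpos : ∀ t : ℝ, 0 < φ t)
    (hφconv : ConvexOn ℝ Set.univ φ)
    (hφderiv : ∀ a : ℝ, HasDerivAt φ (φ' a) a)
    (hφlip : LipschitzWith L φ')
    (hφanti : StrictAnti φ)
    (hφlim : Tendsto φ atTop (nhds 0))
    (q : ℕ → Fin n → ℝ)
    (hq0 : ∀ t i, 0 ≤ q t i)
    (hq1 : ∀ t, ∑ i, q t i = 1)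
    (qlim : Fin n → ℝ)
    (hqlim : ∀ i, Tendsto (fun t => q t i) atTop (nhds (qlim i)))
    (hqpos : ∀ i, 0 < qlim i)
    (θR : ℝ → EuclideanSpace ℝ (Fin d))
    (hθR : ∀ R : ℝ, 0 < R → ‖θR R‖ ≤ R ∧
      ∀ θ : EuclideanSpace ℝ (Fin d), ‖θ‖ ≤ R →
        (∑ i, qlim i * φ (y i * ⟪θR R, x i⟫)) ≤ ∑ i, qlim i * φ (y i * ⟪θ, x i⟫)) :
    (∃ R₀ > (0 : ℝ), ∀ R : ℝ, R₀ ≤ R →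
      ∀ θ' : EuclideanSpace ℝ (Fin d),
        (‖θ'‖ ≤ R ∧ ∀ θ : EuclideanSpace ℝ (Fin d), ‖θ‖ ≤ R →
          (∑ i, qlim i * φ (y i * ⟪θ', x i⟫)) ≤ ∑ i, qlim i * φ (y i * ⟪θ, x i⟫)) →
        θ' = θR R) ∧
    (∀ u : EuclideanSpace ℝ (Fin d),
      Tendsto (fun R : ℝ => R⁻¹ • θR R) atTop (nhds u) →
      ∃ η₀ > (0 : ℝ), ∀ η : ℝ, 0 < η → η ≤ η₀ →
        ∀ θ : ℕ → EuclideanSpace ℝ (Fin d),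
          (∀ t, θ (t + 1) = θ t - η • ∑ i, (q t i * y i * φ' (y i * ⟪θ t, x i⟫)) • x i) →
          Tendsto (fun t => ‖θ t‖⁻¹ • θ t) atTop (nhds u)) := by
  classical
  haveI : Nonempty (Fin n) := ⟨⟨0, hn⟩⟩
  obtain ⟨v, hv⟩ := exists_dual_vec x hli y
  set F : EuclideanSpace ℝ (Fin d) → ℝ := fun θ => ∑ i, qlim i * φ (y i * ⟪θ, x i⟫) with hF
  have hy2 : ∀ i, y i * y i = 1 := by
    intro i; rcases hy i with h | h <;> rw [h] <;> norm_num
  have hvnorm : 0 < ‖v‖ := by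
    rcases eq_or_ne v 0 with h | h
    · exfalso
      have h0 := hv ⟨0, hn⟩
      rw [h, inner_zero_left] at h0
      rcases hy ⟨0, hn⟩ with h' | h' <;> rw [h'] at h0 <;> norm_num at h0
    · exact norm_pos_iff.mpr h
  -- strict improvement along v
  have himp : ∀ (θ : EuclideanSpace ℝ (Fin d)) (ε : ℝ), 0 < ε → F (θ + ε • v) < F θ := by
    intro θ ε hε
    apply Finset.sum_lt_sum_of_nonempty Finset.univ_nonempty
    intro i _
    have hmarg : y i * ⟪θ + ε • v, x i⟫ = y i * ⟪θ, x i⟫ + ε := by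
      rw [inner_add_left, real_inner_smul_left, hv i, mul_add, mul_comm (y i) (ε * y i),
        mul_assoc, hy2 i, mul_one]
    rw [hmarg]
    exact mul_lt_mul_of_pos_left (hφanti (by linarith)) (hqpos i)
  -- every minimizer lies on the sphere
  have hsphere : ∀ R : ℝ, 0 < R → ∀ z : EuclideanSpace ℝ (Fin d),
      ‖z‖ ≤ R → (∀ θ : EuclideanSpace ℝ (Fin d), ‖θ‖ ≤ R → F z ≤ F θ) → ‖z‖ = R := by
    intro R hR z hz hmin
    by_contra hne'
    have hlt : ‖z‖ < R := lt_of_le_of_ne hz hne'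
    set ε := (R - ‖z‖) / ‖v‖ with hεdef
    have hε : 0 < ε := div_pos (by linarith) hvnorm
    have hball : ‖z + ε • v‖ ≤ R := by
      have h1 : ε * ‖v‖ = R - ‖z‖ := by
        rw [hεdef]; field_simp
      calc ‖z + ε • v‖ ≤ ‖z‖ + ‖ε • v‖ := norm_add_le _ _
        _ = ‖z‖ + ε * ‖v‖ := by rw [norm_smul, Real.norm_of_nonneg hε.le]
        _ = R := by rw [h1]; ring
    exact absurd (hmin _ hball) (not_le.mpr (himp z ε hε))
  -- convexity of F at midpoints
  have hmidF : ∀ a c : EuclideanSpace ℝ (Fin d),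
      F ((2 : ℝ)⁻¹ • (a + c)) ≤ (F a + F c) / 2 := by
    intro a c
    have : (F a + F c) / 2 = ∑ i, ((2:ℝ)⁻¹ * (qlim i * φ (y i * ⟪a, x i⟫))
        + (2:ℝ)⁻¹ * (qlim i * φ (y i * ⟪c, x i⟫))) := by
      rw [hF, Finset.sum_add_distrib, ← Finset.mul_sum, ← Finset.mul_sum]; ring
    rw [this, hF]
    apply Finset.sum_le_sum
    intro i _
    have hmarg : y i * ⟪(2:ℝ)⁻¹ • (a + c), x i⟫
        = (2:ℝ)⁻¹ * (y i * ⟪a, x i⟫) + (2:ℝ)⁻¹ * (y i * ⟪c, x i⟫) := by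
      rw [real_inner_smul_left, inner_add_left]; ring
    rw [hmarg]
    have hconv := hφconv.2 (Set.mem_univ (y i * ⟪a, x i⟫)) (Set.mem_univ (y i * ⟪c, x i⟫))
      (by norm_num : (0:ℝ) ≤ (2:ℝ)⁻¹) (by norm_num : (0:ℝ) ≤ (2:ℝ)⁻¹) (by norm_num)
    simp only [smul_eq_mul] at hconv
    calc qlim i * φ ((2:ℝ)⁻¹ * (y i * ⟪a, x i⟫) + (2:ℝ)⁻¹ * (y i * ⟪c, x i⟫))
        ≤ qlim i * ((2:ℝ)⁻¹ * φ (y i * ⟪a, x i⟫) + (2:ℝ)⁻¹ * φ (y i * ⟪c, x i⟫)) :=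
          mul_le_mul_of_nonneg_left hconv (hqpos i).le
      _ = (2:ℝ)⁻¹ * (qlim i * φ (y i * ⟪a, x i⟫)) + (2:ℝ)⁻¹ * (qlim i * φ (y i * ⟪c, x i⟫)) := by ring
  constructor
  · -- Part (a): uniqueness of the minimizer for every R ≥ 1.
    refine ⟨1, one_pos, ?_⟩
    intro R hR θ' ⟨hθ'b, hθ'min⟩
    have hRpos : (0:ℝ) < R := lt_of_lt_of_le one_pos hR
    obtain ⟨hb, hmin⟩ := hθR R hRpos
    by_contra hne'
    have hn1 : ‖θ'‖ = R := hsphere R hRpos θ' hθ'b hθ'min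
    have hn2 : ‖θR R‖ = R := hsphere R hRpos (θR R) hb hmin
    have hFeq : F θ' = F (θR R) := le_antisymm (hθ'min _ hb) (hmin _ hθ'b)
    set m : EuclideanSpace ℝ (Fin d) := (2:ℝ)⁻¹ • (θ' + θR R) with hm
    have hFm : F m ≤ F θ' := by
      have := hmidF θ' (θR R)
      rw [hFeq] at this ⊢
      calc F m ≤ (F (θR R) + F (θR R)) / 2 := by rw [hm] at *; linarith [hmidF θ' (θR R), hFeq]
        _ = F (θR R) := by ring
    have hmb : ‖m‖ < R := by
      have hpar := parallelogram_law_with_norm ℝ θ' (θR R)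
      have hd : 0 < ‖θ' - θR R‖ := by
        rw [norm_pos_iff, sub_ne_zero]; exact hne'
      have hsum : ‖θ' + θR R‖ ^ 2 < (2 * R) ^ 2 := by nlinarith [hpar, hn1, hn2, hd]
      have hsumlt : ‖θ' + θR R‖ < 2 * R := by
        nlinarith [norm_nonneg (θ' + θR R), hRpos]
      have : ‖m‖ = ‖θ' + θR R‖ / 2 := by
        rw [hm, norm_smul]; norm_num; ring
      rw [this]; linarith
    have hmmin : ∀ θ : EuclideanSpace ℝ (Fin d), ‖θ‖ ≤ R → F m ≤ F θ := by
      intro θ hθ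
      exact le_trans hFm (hθ'min θ hθ)
    exact absurd (hsphere R hRpos m hmb.le hmmin) (ne_of_lt hmb)
  · -- Part (b): directional convergence of the GRW iterates.
    intro u hu
    have hsph : ∀ R : ℝ, 0 < R → ‖θR R‖ = R := by
      intro R hR
      exact hsphere R hR (θR R) (hθR R hR).1 (hθR R hR).2
    exact part_b hn x hx y hy hli φ φ' L hφpos hφconv hφderiv hφlip hφanti
      q hq0 hq1 qlim hqlim hqpos θR hθR v hv hsph u hu
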